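/- In the three-element Kleene algebra 3, let β⁻, β⁺ : {0,a,1} → {0,1} be the lattice homomorphisms to the two-element lattice with β⁻(a) = 1 and β⁺(a) = 0 (both sending 0↦0, 1↦1). Then the set {(x,y) : β⁻(x) ≤ β⁻(y)} has as its unique maximal subalgebra (under the Kleene operations acting coordinatewise) the partial order ≼ on {0,a,1} with 0 ≺ a, 1 ≺ a, and 0,1 incomparable; i.e., ≼ = {(0,0),(a,a),(1,1),(0,a),(1,a)} is closed under ∧, ∨, ¬ coordinatewise and contains every subalgebra of {(x,y) : β⁻(x) ≤ β⁻(y)}. -/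
import Mathlib


/-- Universe of the three-element Kleene algebra, encoded as {0,1,2} ⊆ ℤ
(0 ↦ 0, a ↦ 1, 1 ↦ 2). -/
def K3 : Set ℤ := {0, 1, 2}

/-- Kleene negation. -/
def kneg (x : ℤ) : ℤ := 2 - x

/-- The carrier map β⁻ (0 ↦ 0, a ↦ 1, 1 ↦ 1). -/
def betaMinus (x : ℤ) : ℤ := min x 1

/-- The partial order ≼ with 0 ≺ a, 1 ≺ a and 0, 1 incomparable. -/
def Pord : Set (ℤ × ℤ) := {(0, 0), (1, 1), (2, 2), (0, 1), (2, 1)}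

/-- `≼` is the unique maximal subalgebra of `(β⁻, β⁻)⁻¹(≤)`. -/
theorem pord_unique_maximal_subalgebra :
    (Pord ⊆ {p | p.1 ∈ K3 ∧ p.2 ∈ K3 ∧ betaMinus p.1 ≤ betaMinus p.2}) ∧
    (∀ p ∈ Pord, ∀ q ∈ Pord,
      (min p.1 q.1, min p.2 q.2) ∈ Pord ∧
      (max p.1 q.1, max p.2 q.2) ∈ Pord ∧
      (kneg p.1, kneg p.2) ∈ Pord) ∧
    (∀ S : Set (ℤ × ℤ),
      S ⊆ {p | p.1 ∈ K3 ∧ p.2 ∈ K3 ∧ betaMinus p.1 ≤ betaMinus p.2} →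
      (∀ p ∈ S, ∀ q ∈ S,
        (min p.1 q.1, min p.2 q.2) ∈ S ∧
        (max p.1 q.1, max p.2 q.2) ∈ S ∧
        (kneg p.1, kneg p.2) ∈ S) →
      S ⊆ Pord) := by
  refine ⟨?_, ?_, ?_⟩
  · intro p hp
    simp only [Pord, Set.mem_insert_iff, Set.mem_singleton_iff] at hp
    rcases hp with h|h|h|h|h <;> subst h <;>
      simp [K3, betaMinus]
  · intro p hp q hq
    simp only [Pord, Set.mem_insert_iff, Set.mem_singleton_iff] at hp hq ⊢
    rcases hp with h|h|h|h|h <;> rcases hq with h'|h'|h'|h'|h' <;> subst h <;> subst h' <;>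
      simp [kneg, Prod.ext_iff]
  · intro S hsub hcl p hp
    have h1 := hsub hp
    have h2 := hsub (hcl p hp p hp).2.2
    simp only [Set.mem_setOf_eq, K3, Set.mem_insert_iff, Set.mem_singleton_iff,
      betaMinus, kneg] at h1 h2
    simp only [Pord, Set.mem_insert_iff, Set.mem_singleton_iff, Prod.ext_iff]
    have hx : p = (p.1, p.2) := rfl
    rw [min_def] at *
    omega
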